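/- Let (X,T) be a minimal system and suppose (X,T) is mildly mixing with |X| > 1. Then the hyperspace system (K(X),T_K) is not pointwise positively recurrent. More precisely: if for every pair of nonempty open sets U, V the transfer set N(U,V) is an IP*-set, and X has more than one point, then some A ∈ K(X) is not positively recurrent under T_K. -/

import Mathlib

open TopologicalSpace Metric Set

/-- The induced map `T_K` on the hyperspace of nonempty compact subsets. -/
noncomputable def inducedMap {X : Type*} [MetricSpace X] {T : X → X} (hT : Continuous T)
    (A : NonemptyCompacts X) : NonemptyCompacts X :=
  ⟨⟨T '' A, A.isCompact.image hT⟩, A.nonempty.image T⟩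

/-- A set of positive integers is an IP-set if it contains all finite sums of some
infinite sequence of positive integers. -/
def IsIPSet (Q : Set ℕ) : Prop :=
  ∃ p : ℕ → ℕ, (∀ i, 0 < p i) ∧
    ∀ s : Finset ℕ, s.Nonempty → (∑ i ∈ s, p i) ∈ Q

/-- A set is IP* if it meets every IP-set. -/
def IsIPStar (S : Set ℕ) : Prop :=
  ∀ Q : Set ℕ, IsIPSet Q → (S ∩ Q).Nonempty

/-- A point `x` is positively recurrent for `T`. -/
def RecurrentPt {Y : Type*} [MetricSpace Y] (T : Y → Y) (x : Y) : Prop :=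
  ∀ ε > (0:ℝ), ∀ N : ℕ, ∃ m ≥ N, dist (T^[m] x) x < ε

/-- Wellfounded recursion helper: `natSeqRec step k = step k (previous values)`. -/
noncomputable def natSeqRec (step : ℕ → (ℕ → ℕ) → ℕ) : ℕ → ℕ
  | k => step k (fun i => if h : i < k then natSeqRec step i else 0)
  termination_by k => k
  decreasing_by exact h

lemma natSeqRec_eq (step : ℕ → (ℕ → ℕ) → ℕ) (k : ℕ) :
    natSeqRec step k = step k (fun i => if h : i < k then natSeqRec step i else 0) := by
  rw [natSeqRec]

/-- Carrier of the iterated induced map. -/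
lemma inducedMap_iterate_coe {X : Type*} [MetricSpace X] {T : X → X} (hT : Continuous T)
    (A : NonemptyCompacts X) (n : ℕ) :
    (((inducedMap hT)^[n] A : NonemptyCompacts X) : Set X) = T^[n] '' (A : Set X) := by
  induction n with
  | zero => simp
  | succ n ih =>
    rw [Function.iterate_succ_apply', Function.iterate_succ']
    show T '' (((inducedMap hT)^[n] A : NonemptyCompacts X) : Set X)
        = (T ∘ T^[n]) '' (A : Set X)
    rw [ih, Set.image_comp]

lemma continuous_inducedMap {X : Type*} [MetricSpace X] [CompactSpace X] {T : X → X}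
    (hT : Continuous T) : Continuous (inducedMap hT) := by
  rw [Metric.continuous_iff]
  intro A ε hε
  obtain ⟨δ, hδ, hδ'⟩ := Metric.uniformContinuous_iff.1
    (CompactSpace.uniformContinuous_of_continuous hT) (ε / 2) (by linarith)
  refine ⟨δ, hδ, fun B hAB => ?_⟩
  rw [NonemptyCompacts.dist_eq] at hAB ⊢
  have hfin : EMetric.hausdorffEdist ((B : Set X)) ((A : Set X)) ≠ ⊤ :=
    hausdorffEdist_ne_top_of_nonempty_of_bounded B.nonempty A.nonempty
      B.isCompact.isBounded A.isCompact.isBounded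
  have key : hausdorffDist ((inducedMap hT B : NonemptyCompacts X) : Set X)
      ((inducedMap hT A : NonemptyCompacts X) : Set X) ≤ ε / 2 := by
    apply hausdorffDist_le_of_mem_dist (by linarith)
    · rintro _ ⟨b, hb, rfl⟩
      obtain ⟨a, ha, hd⟩ := exists_dist_lt_of_hausdorffDist_lt hb hAB hfin
      exact ⟨T a, Set.mem_image_of_mem T ha, (hδ' hd).le⟩
    · rintro _ ⟨a, ha, rfl⟩
      obtain ⟨b, hb, hd⟩ := exists_dist_lt_of_hausdorffDist_lt' ha hAB hfin
      exact ⟨T b, Set.mem_image_of_mem T hb, by rw [dist_comm]; exact (hδ' hd).le⟩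
  linarith

/-- The return times of a recurrent point form an IP-set : Furstenberg's construction. -/
lemma isIPSet_of_recurrent {Y : Type*} [MetricSpace Y] {S : Y → Y} (hS : Continuous S)
    {a : Y} (hrec : RecurrentPt S a) {ε : ℝ} (hε : 0 < ε) :
    IsIPSet {n | 0 < n ∧ dist (S^[n] a) a < ε} := by
  -- finite simultaneous continuity at `a`
  have hcont : ∀ F : Finset ℕ, ∀ η > (0:ℝ), ∃ γ > (0:ℝ), ∀ y, dist y a < γ →
      ∀ m ∈ F, dist (S^[m] y) (S^[m] a) < η := by
    intro F η hη
    induction F using Finset.induction with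
    | empty => exact ⟨1, one_pos, fun y _ m hm => absurd hm (Finset.notMem_empty m)⟩
    | @insert j F hj ih =>
      obtain ⟨γ, hγ0, hγ⟩ := ih
      obtain ⟨γ', hγ'0, hγ'⟩ := Metric.continuousAt_iff.1 ((hS.iterate j).continuousAt) η hη
      refine ⟨min γ γ', lt_min hγ0 hγ'0, fun y hy m hm => ?_⟩
      rcases Finset.mem_insert.1 hm with rfl | hm
      · exact hγ' (lt_of_lt_of_le hy (min_le_right _ _))
      · exact hγ y (lt_of_lt_of_le hy (min_le_left _ _)) m hm
  -- one step of the construction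
  have key : ∀ (F : Finset ℕ) (δ : ℝ), 0 < δ → (∀ m ∈ F, dist (S^[m] a) a < ε - δ) →
      ∃ n, 0 < n ∧ dist (S^[n] a) a < δ / 2 ∧
        ∀ m ∈ F, dist (S^[m + n] a) a < ε - δ / 2 := by
    intro F δ hδ hF
    obtain ⟨γ, hγ0, hγ⟩ := hcont F (δ / 2) (by linarith)
    obtain ⟨n, hn1, hn2⟩ := hrec (min γ (δ / 2)) (lt_min hγ0 (by linarith)) 1
    have hnγ : dist (S^[n] a) a < γ := lt_of_lt_of_le hn2 (min_le_left _ _)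
    refine ⟨n, hn1, lt_of_lt_of_le hn2 (min_le_right _ _), fun m hm => ?_⟩
    rw [Function.iterate_add_apply]
    calc dist (S^[m] (S^[n] a)) a
        ≤ dist (S^[m] (S^[n] a)) (S^[m] a) + dist (S^[m] a) a := dist_triangle _ _ _
      _ < δ / 2 + (ε - δ) := add_lt_add (hγ _ hnγ m hm) (hF m hm)
      _ ≤ ε - δ / 2 := by linarith
  -- the conditional step, via choice
  have exstep : ∀ (k : ℕ) (q : ℕ → ℕ), ∃ n, 0 < n ∧
      ((∀ s : Finset ℕ, s.Nonempty → s ⊆ Finset.range k →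
          dist (S^[∑ i ∈ s, q i] a) a < ε - ε / 2 ^ k) →
        dist (S^[n] a) a < ε / 2 ^ (k + 1) ∧
        ∀ s : Finset ℕ, s.Nonempty → s ⊆ Finset.range k →
          dist (S^[(∑ i ∈ s, q i) + n] a) a < ε - ε / 2 ^ (k + 1)) := by
    intro k q
    by_cases h : ∀ s : Finset ℕ, s.Nonempty → s ⊆ Finset.range k →
        dist (S^[∑ i ∈ s, q i] a) a < ε - ε / 2 ^ k
    · set F := ((Finset.range k).powerset.filter (fun s => s.Nonempty)).image
        (fun s => ∑ i ∈ s, q i) with hFdef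
      have hF : ∀ m ∈ F, dist (S^[m] a) a < ε - ε / 2 ^ k := by
        intro m hm
        rw [hFdef, Finset.mem_image] at hm
        obtain ⟨s, hs, rfl⟩ := hm
        rw [Finset.mem_filter, Finset.mem_powerset] at hs
        exact h s hs.2 hs.1
      obtain ⟨n, hn0, hn1, hn2⟩ := key F (ε / 2 ^ k) (by positivity) hF
      have hhalf : ε / 2 ^ k / 2 = ε / 2 ^ (k + 1) := by rw [pow_succ]; ring
      refine ⟨n, hn0, fun _ => ⟨by rw [← hhalf]; exact hn1, fun s hs hsub => ?_⟩⟩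
      rw [← hhalf]
      apply hn2
      rw [hFdef, Finset.mem_image]
      exact ⟨s, by rw [Finset.mem_filter, Finset.mem_powerset]; exact ⟨hsub, hs⟩, rfl⟩
    · exact ⟨1, one_pos, fun hc => absurd hc h⟩
  choose step hstep0 hstep1 using exstep
  set p := natSeqRec step with hpdef
  have hp : ∀ k, p k = step k (fun i => if h : i < k then p i else 0) := fun k =>
    natSeqRec_eq step k
  have hsumq : ∀ k (s : Finset ℕ), s ⊆ Finset.range k →
      (∑ i ∈ s, (fun i => if h : i < k then p i else 0) i) = ∑ i ∈ s, p i := by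
    intro k s hs
    refine Finset.sum_congr rfl fun i hi => ?_
    exact dif_pos (Finset.mem_range.1 (hs hi))
  have h2pow : ∀ k : ℕ, ε / 2 ^ (k + 1) < ε / 2 ^ k := by
    intro k
    rw [pow_succ, ← div_div]
    exact half_lt_self (by positivity)
  have hle2 : ∀ k : ℕ, ε / 2 ^ (k + 1) ≤ ε / 2 := by
    intro k
    apply div_le_div_of_nonneg_left hε.le two_pos
    calc (2:ℝ) = 2 ^ 1 := (pow_one 2).symm
      _ ≤ 2 ^ (k + 1) := by
        apply pow_le_pow_right₀ one_le_two
        omega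
  -- the invariant
  have inv : ∀ k, ∀ s : Finset ℕ, s.Nonempty → s ⊆ Finset.range k →
      dist (S^[∑ i ∈ s, p i] a) a < ε - ε / 2 ^ k := by
    intro k
    induction k with
    | zero =>
      intro s hs hsub
      obtain ⟨i, hi⟩ := hs
      simpa using hsub hi
    | succ k ih =>
      intro s hs hsub
      have hhyp : ∀ t : Finset ℕ, t.Nonempty → t ⊆ Finset.range k →
          dist (S^[∑ i ∈ t, (fun i => if h : i < k then p i else 0) i] a) a
            < ε - ε / 2 ^ k := by
        intro t ht htsub
        rw [hsumq k t htsub]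
        exact ih t ht htsub
      have hconc := hstep1 k _ hhyp
      by_cases hk : k ∈ s
      · have hs' : s.erase k ⊆ Finset.range k := by
          intro i hi
          rw [Finset.mem_erase] at hi
          have := Finset.mem_range.1 (hsub hi.2)
          exact Finset.mem_range.2 (by omega)
        have hsum : ∑ i ∈ s, p i = (∑ i ∈ s.erase k, p i) + p k := by
          rw [add_comm, Finset.add_sum_erase _ _ hk]
        rcases (s.erase k).eq_empty_or_nonempty with he | hne
        · rw [hsum, he, Finset.sum_empty, zero_add, hp k]
          have h1 := hconc.1
          have h3 := hle2 k
          linarith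
        · have := hconc.2 (s.erase k) hne hs'
          rw [hsumq k _ hs'] at this
          rw [hsum, hp k]
          exact this
      · have hsub' : s ⊆ Finset.range k := by
          intro i hi
          have h1 := Finset.mem_range.1 (hsub hi)
          have h2 : i ≠ k := by rintro rfl; exact hk hi
          exact Finset.mem_range.2 (by omega)
        have := ih s hs hsub'
        have := h2pow k
        linarith
  have hppos : ∀ i, 0 < p i := fun i => by rw [hp i]; exact hstep0 i _
  refine ⟨p, hppos, fun s hs => ?_⟩
  constructor
  · exact Finset.sum_pos (fun i _ => hppos i) hs
  · have hsub : s ⊆ Finset.range (s.max' hs + 1) := fun i hi =>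
      Finset.mem_range.2 (Nat.lt_succ_of_le (Finset.le_max' s i hi))
    have h1 := inv _ s hs hsub
    have h2 : (0:ℝ) < ε / 2 ^ (s.max' hs + 1) := by positivity
    linarith

theorem not_pointwise_recurrent_induced_of_mildly_mixing {X : Type*} [MetricSpace X]
    [CompactSpace X] (T : X → X) (hT : Continuous T) (hsurj : Function.Surjective T)
    (hmin : ∀ x : X, Dense (Set.range fun n : ℕ => T^[n] x))
    (hmm : ∀ U V : Set X, IsOpen U → IsOpen V → U.Nonempty → V.Nonempty →
      IsIPStar {n : ℕ | (U ∩ T^[n] ⁻¹' V).Nonempty})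
    (hcard : ∃ x y : X, x ≠ y) :
    ∃ A : NonemptyCompacts X, ¬ RecurrentPt (inducedMap hT) A := by
  by_contra hA
  push_neg at hA
  obtain ⟨x, y, hxy⟩ := hcard
  have hd : 0 < dist x y := dist_pos.2 hxy
  set r := dist x y / 3 with hr
  have hr0 : 0 < r := by positivity
  set A : NonemptyCompacts X :=
    ⟨⟨closedBall x (r / 2), (isClosed_closedBall).isCompact⟩,
      ⟨x, mem_closedBall_self (by positivity)⟩⟩ with hAdef
  have hrec := hA A
  have hQ : IsIPSet {n | 0 < n ∧ dist ((inducedMap hT)^[n] A) A < r / 2} :=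
    isIPSet_of_recurrent (continuous_inducedMap hT) hrec (by positivity)
  obtain ⟨n, hn1, hn2⟩ := hmm (ball x (r / 2)) (ball y r) isOpen_ball isOpen_ball
    ⟨x, mem_ball_self (by positivity)⟩ ⟨y, mem_ball_self hr0⟩ _ hQ
  obtain ⟨w, hw1, hw2⟩ := hn1
  have hwA : w ∈ (A : Set X) := ball_subset_closedBall hw1
  have hdist : hausdorffDist (T^[n] '' (A : Set X)) (A : Set X) < r / 2 := by
    have h := hn2.2
    rw [NonemptyCompacts.dist_eq, inducedMap_iterate_coe] at h
    exact h
  have hfin : EMetric.hausdorffEdist (T^[n] '' (A : Set X)) (A : Set X) ≠ ⊤ :=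
    hausdorffEdist_ne_top_of_nonempty_of_bounded ⟨_, mem_image_of_mem _ hwA⟩ A.nonempty
      ((A.isCompact.image (hT.iterate n)).isBounded) A.isCompact.isBounded
  obtain ⟨b, hb, hdb⟩ :=
    exists_dist_lt_of_hausdorffDist_lt (mem_image_of_mem (T^[n]) hwA) hdist hfin
  have hbx : dist b x ≤ r / 2 := hb
  have h1 : dist (T^[n] w) x < r := by
    calc dist (T^[n] w) x ≤ dist (T^[n] w) b + dist b x := dist_triangle _ _ _
      _ < r / 2 + r / 2 := by linarith
      _ = r := by ring
  have h2 : dist (T^[n] w) y < r := hw2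
  have h3 : dist x y ≤ dist x (T^[n] w) + dist (T^[n] w) y := dist_triangle _ _ _
  rw [dist_comm x (T^[n] w)] at h3
  rw [hr] at h1 h2
  linarith
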